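/- Let f be a Boolean function depending on all n of its variables, computed by a DNF with f(0^n) = 0, non-redundant terms, and pairwise disjoint positive-variable sets (block property). Then s(f) ≥ n^{1/3} / 2. -/

import Mathlib

open Finset

variable {ι : Type*} [Fintype ι] [DecidableEq ι]

/-- Flip one coordinate of a Boolean input. -/
def bflip (x : ι → Bool) (i : ι) : ι → Bool := Function.update x i (!x i)

/-- Flip a block (set) of coordinates of a Boolean input. -/
def bflipS (x : ι → Bool) (B : Finset ι) : ι → Bool := fun j => if j ∈ B then !x j else x j

/-- Sensitivity of `f` at `x`. -/
def sensAt (f : (ι → Bool) → Bool) (x : ι → Bool) : ℕ :=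
  (univ.filter fun i => f (bflip x i) ≠ f x).card

/-- Sensitivity of `f`. -/
def sens (f : (ι → Bool) → Bool) : ℕ := univ.sup (sensAt f)

/-- 0-sensitivity of `f`. -/
def sens0 (f : (ι → Bool) → Bool) : ℕ := (univ.filter fun x => f x = false).sup (sensAt f)

/-- 1-sensitivity of `f`. -/
def sens1 (f : (ι → Bool) → Bool) : ℕ := (univ.filter fun x => f x = true).sup (sensAt f)

/-- Block sensitivity of `f` at `x`: the largest number of pairwise disjoint
sensitive blocks. -/
noncomputable def bsAt (f : (ι → Bool) → Bool) (x : ι → Bool) : ℕ :=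
  sSup {k | ∃ B : Fin k → Finset ι, (∀ i j, i ≠ j → Disjoint (B i) (B j)) ∧
    ∀ j, f (bflipS x (B j)) ≠ f x}

/-- Block sensitivity of `f`. -/
noncomputable def bs (f : (ι → Bool) → Bool) : ℕ := univ.sup (bsAt f)

/-- 0-block sensitivity of `f`. -/
noncomputable def bs0 (f : (ι → Bool) → Bool) : ℕ := (univ.filter fun x => f x = false).sup (bsAt f)

/-- A DNF term, given by its positive variable set `t.1` and negative variable
set `t.2`, is true on `x`. -/
def TermTrue {n : ℕ} (t : Finset (Fin n) × Finset (Fin n)) (x : Fin n → Bool) : Prop :=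
  (∀ j ∈ t.1, x j = true) ∧ (∀ j ∈ t.2, x j = false)

/-- Indicator input of a finite set. -/
def onS {n : ℕ} (S : Finset (Fin n)) : Fin n → Bool := fun k => decide (k ∈ S)

lemma onS_empty {n : ℕ} : (onS (∅ : Finset (Fin n))) = fun _ => false := by
  funext k; simp [onS]

lemma bflip_onS_mem {n : ℕ} (S : Finset (Fin n)) (k : Fin n) (hk : k ∈ S) :
    bflip (onS S) k = onS (S.erase k) := by
  funext j
  by_cases hj : j = k
  · subst hj; simp [bflip, onS, Function.update_apply, hk]
  · simp [bflip, onS, Function.update_apply, hj, Finset.mem_erase]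

lemma bflip_onS_not_mem {n : ℕ} (S : Finset (Fin n)) (k : Fin n) (hk : k ∉ S) :
    bflip (onS S) k = onS (insert k S) := by
  funext j
  by_cases hj : j = k
  · subst hj; simp [bflip, onS, Function.update_apply, hk]
  · simp [bflip, onS, Function.update_apply, hj, Finset.mem_insert]

lemma termTrue_onS_iff {n : ℕ} (t : Finset (Fin n) × Finset (Fin n)) (S : Finset (Fin n)) :
    TermTrue t (onS S) ↔ (t.1 ⊆ S ∧ ∀ k ∈ t.2, k ∉ S) := by
  constructor
  · rintro ⟨h1, h2⟩
    refine ⟨fun k hk => ?_, fun k hk hkS => ?_⟩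
    · have := h1 k hk; simpa [onS] using this
    · have := h2 k hk; simp [onS, hkS] at this
  · rintro ⟨h1, h2⟩
    refine ⟨fun k hk => ?_, fun k hk => ?_⟩
    · simp [onS]; exact h1 hk
    · simp [onS]; exact h2 k hk

lemma sensAt_ge {n : ℕ} (f : (Fin n → Bool) → Bool) (x : Fin n → Bool) (S : Finset (Fin n))
    (h : ∀ k ∈ S, f (bflip x k) ≠ f x) : S.card ≤ sensAt f x := by
  apply Finset.card_le_card
  intro k hk
  exact Finset.mem_filter.2 ⟨Finset.mem_univ k, h k hk⟩

/-- Caro–Wei style greedy independent set bound. -/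
lemma caroWei {α : Type*} [DecidableEq α] (E : α → α → Prop) [DecidableRel E]
    (V : Finset α) :
    ∃ M : Finset α, M ⊆ V ∧ (∀ i ∈ M, ∀ j ∈ M, i ≠ j → ¬ E i j) ∧
      ∑ v ∈ V, (((V.filter fun u => u ≠ v ∧ (E v u ∨ E u v)).card : ℝ) + 1)⁻¹ ≤ M.card := by
  induction V using Finset.strongInduction with
  | _ V ih =>
    rcases V.eq_empty_or_nonempty with rfl | hne
    · exact ⟨∅, by simp⟩
    obtain ⟨v₀, hv₀V, hmin⟩ := V.exists_min_image
      (fun v => (V.filter fun u => u ≠ v ∧ (E v u ∨ E u v)).card) hne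
    set V' := V.filter (fun u => ¬(u = v₀ ∨ E v₀ u ∨ E u v₀)) with hV'
    have hv₀V' : v₀ ∉ V' := by simp [hV']
    have hV'ss : V' ⊂ V := by
      refine ⟨filter_subset _ _, fun hsub => hv₀V' (hsub hv₀V)⟩
    obtain ⟨M, hMV', hMind, hMsum⟩ := ih V' hV'ss
    have hv₀M : v₀ ∉ M := fun h => hv₀V' (hMV' h)
    refine ⟨insert v₀ M, ?_, ?_, ?_⟩
    · intro u hu
      rcases Finset.mem_insert.1 hu with rfl | hu
      · exact hv₀V
      · exact (Finset.filter_subset _ _) (hMV' hu)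
    · have hMno : ∀ u ∈ M, ¬ E v₀ u ∧ ¬ E u v₀ := by
        intro u hu
        have := hMV' hu
        simp only [hV', Finset.mem_filter] at this
        tauto
      intro i hi j hj hij
      rcases Finset.mem_insert.1 hi with hi' | hi'
      · rcases Finset.mem_insert.1 hj with hj' | hj'
        · exact absurd (hi'.trans hj'.symm) hij
        · subst hi'; exact (hMno j hj').1
      · rcases Finset.mem_insert.1 hj with hj' | hj'
        · subst hj'; exact (hMno i hi').2
        · exact hMind i hi' j hj' hij
    · rw [Finset.card_insert_of_notMem hv₀M]
      -- split the sum over V into V' and the rest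
      have hsplit :
          ∑ v ∈ V, (((V.filter fun u => u ≠ v ∧ (E v u ∨ E u v)).card : ℝ) + 1)⁻¹ =
          (∑ v ∈ V.filter (fun u => ¬(u = v₀ ∨ E v₀ u ∨ E u v₀)),
            (((V.filter fun u => u ≠ v ∧ (E v u ∨ E u v)).card : ℝ) + 1)⁻¹) +
          ∑ v ∈ V.filter (fun u => (u = v₀ ∨ E v₀ u ∨ E u v₀)),
            (((V.filter fun u => u ≠ v ∧ (E v u ∨ E u v)).card : ℝ) + 1)⁻¹ := by
        rw [add_comm]
        exact (Finset.sum_filter_add_sum_filter_not V _ _).symm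
      rw [hsplit]
      have h1 : (∑ v ∈ V', (((V.filter fun u => u ≠ v ∧ (E v u ∨ E u v)).card : ℝ) + 1)⁻¹)
          ≤ (M.card : ℝ) := by
        refine le_trans (Finset.sum_le_sum ?_) hMsum
        intro v hv
        have hsub : (V'.filter fun u => u ≠ v ∧ (E v u ∨ E u v)) ⊆
            (V.filter fun u => u ≠ v ∧ (E v u ∨ E u v)) :=
          Finset.filter_subset_filter _ (Finset.filter_subset _ _)
        have hc := Finset.card_le_card hsub
        have h1 : (0:ℝ) < ((V'.filter fun u => u ≠ v ∧ (E v u ∨ E u v)).card : ℝ) + 1 := by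
          positivity
        apply inv_anti₀ h1
        exact_mod_cast Nat.add_le_add_right hc 1
      have h2 : (∑ v ∈ V.filter (fun u => (u = v₀ ∨ E v₀ u ∨ E u v₀)),
            (((V.filter fun u => u ≠ v ∧ (E v u ∨ E u v)).card : ℝ) + 1)⁻¹) ≤ 1 := by
        set δ := (V.filter fun u => u ≠ v₀ ∧ (E v₀ u ∨ E u v₀)).card with hδ
        have hR : (V.filter (fun u => (u = v₀ ∨ E v₀ u ∨ E u v₀))) ⊆
            insert v₀ (V.filter fun u => u ≠ v₀ ∧ (E v₀ u ∨ E u v₀)) := by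
          intro u hu
          simp only [Finset.mem_filter] at hu
          rcases hu with ⟨huV, hu2⟩
          by_cases h : u = v₀
          · simp [h]
          · apply Finset.mem_insert_of_mem
            refine Finset.mem_filter.2 ⟨huV, h, ?_⟩
            tauto
        have hRcard : (V.filter (fun u => (u = v₀ ∨ E v₀ u ∨ E u v₀))).card ≤ δ + 1 := by
          calc _ ≤ (insert v₀ (V.filter fun u => u ≠ v₀ ∧ (E v₀ u ∨ E u v₀))).card :=
                Finset.card_le_card hR
            _ ≤ δ + 1 := by rw [hδ]; exact Finset.card_insert_le _ _
        have hterm : ∀ v ∈ V.filter (fun u => (u = v₀ ∨ E v₀ u ∨ E u v₀)),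
            (((V.filter fun u => u ≠ v ∧ (E v u ∨ E u v)).card : ℝ) + 1)⁻¹ ≤ ((δ : ℝ) + 1)⁻¹ := by
          intro v hv
          have hvV : v ∈ V := (Finset.mem_filter.1 hv).1
          have := hmin v hvV
          apply inv_anti₀ (by positivity)
          exact_mod_cast Nat.add_le_add_right this 1
        calc _ ≤ ∑ _v ∈ V.filter (fun u => (u = v₀ ∨ E v₀ u ∨ E u v₀)), ((δ : ℝ) + 1)⁻¹ :=
              Finset.sum_le_sum hterm
          _ = ((V.filter (fun u => (u = v₀ ∨ E v₀ u ∨ E u v₀))).card : ℝ) * ((δ : ℝ) + 1)⁻¹ := by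
              rw [Finset.sum_const]; ring
          _ ≤ ((δ : ℝ) + 1) * ((δ : ℝ) + 1)⁻¹ := by
              apply mul_le_mul_of_nonneg_right _ (by positivity)
              exact_mod_cast hRcard
          _ ≤ 1 := by
              rw [mul_inv_cancel₀]; positivity
      push_cast
      linarith
theorem sens_ge_cbrt {n w : ℕ} (f : (Fin n → Bool) → Bool)
    (T : Fin w → Finset (Fin n) × Finset (Fin n))
    (hterm : ∀ i, Disjoint (T i).1 (T i).2)
    (hf : ∀ x, f x = true ↔ ∃ i, TermTrue (T i) x)
    (h0 : f (fun _ => false) = false)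
    (hnr : ∀ i, ∃ x, TermTrue (T i) x ∧ ∀ j, j ≠ i → ¬ TermTrue (T j) x)
    (hblock : ∀ i j, i ≠ j → Disjoint (T i).1 (T j).1)
    (hdep : ∀ i : Fin n, ∃ x, f (bflip x i) ≠ f x) :
    (n : ℝ) ^ ((1 : ℝ) / 3) / 2 ≤ (sens f : ℝ) := by
  classical
  set s := sens f with hs
  have hsensAt_le : ∀ x, sensAt f x ≤ s := fun x => Finset.le_sup (Finset.mem_univ x)
  -- basic evaluation lemmas
  have hffalse : ∀ S : Finset (Fin n), (∀ i, ¬ ((T i).1 ⊆ S)) → f (onS S) = false := by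
    intro S hS
    by_contra h
    have : f (onS S) = true := by revert h; cases f (onS S) <;> simp
    obtain ⟨i, hi⟩ := (hf _).1 this
    exact hS i ((termTrue_onS_iff _ _).1 hi).1
  have hftrue : ∀ (S : Finset (Fin n)) (i : Fin w), (T i).1 ⊆ S → (∀ k ∈ (T i).2, k ∉ S) →
      f (onS S) = true := by
    intro S i h1 h2
    exact (hf _).2 ⟨i, (termTrue_onS_iff _ _).2 ⟨h1, h2⟩⟩
  -- every positive set is nonempty
  have hPne : ∀ i, ((T i).1).Nonempty := by
    intro i
    rcases Finset.eq_empty_or_nonempty (T i).1 with he | h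
    · exfalso
      have : f (onS ∅) = true := hftrue ∅ i (by simp [he]) (by simp)
      rw [onS_empty] at this
      rw [h0] at this
      exact Bool.false_ne_true this
    · exact h
  -- width d
  set d := univ.sup (fun i : Fin w => ((T i).1).card + ((T i).2).card) with hd
  have hd_le : ∀ i, ((T i).1).card + ((T i).2).card ≤ d := fun i =>
    Finset.le_sup (f := fun i : Fin w => ((T i).1).card + ((T i).2).card) (Finset.mem_univ i)
  -- (a) n ≤ w * d
  have hnwd : n ≤ w * d := by
    have hcover : (univ : Finset (Fin n)) ⊆
        univ.biUnion (fun i : Fin w => (T i).1 ∪ (T i).2) := by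
      intro k _
      by_contra hk
      simp only [Finset.mem_biUnion, Finset.mem_union, not_exists, not_and, not_or] at hk
      obtain ⟨x, hx⟩ := hdep k
      apply hx
      have hagree : ∀ j, TermTrue (T j) (bflip x k) ↔ TermTrue (T j) x := by
        intro j
        have hcoord : ∀ m, m ∈ (T j).1 ∪ (T j).2 → bflip x k m = x m := by
          intro m hm
          have : m ≠ k := by
            rintro rfl
            have h' := hk j (Finset.mem_univ j)
            rcases Finset.mem_union.1 hm with h | h
            · exact h'.1 h
            · exact h'.2 h
          simp [bflip, Function.update_apply, this]
        constructor <;> rintro ⟨h1, h2⟩ <;>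
          refine ⟨fun m hm => ?_, fun m hm => ?_⟩
        · rw [← hcoord m (Finset.mem_union_left _ hm)]; exact h1 m hm
        · rw [← hcoord m (Finset.mem_union_right _ hm)]; exact h2 m hm
        · rw [hcoord m (Finset.mem_union_left _ hm)]; exact h1 m hm
        · rw [hcoord m (Finset.mem_union_right _ hm)]; exact h2 m hm
      have h1 := hf (bflip x k)
      have h2 := hf x
      cases hb : f (bflip x k) <;> cases hb2 : f x
      · rfl
      · exfalso
        obtain ⟨j, hj⟩ := (h2).1 hb2
        have : f (bflip x k) = true := h1.2 ⟨j, (hagree j).2 hj⟩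
        rw [hb] at this; exact Bool.false_ne_true this
      · exfalso
        obtain ⟨j, hj⟩ := h1.1 hb
        have : f x = true := h2.2 ⟨j, (hagree j).1 hj⟩
        rw [hb2] at this; exact Bool.false_ne_true this
      · rfl
    calc n = (univ : Finset (Fin n)).card := by simp
      _ ≤ (univ.biUnion (fun i : Fin w => (T i).1 ∪ (T i).2)).card :=
          Finset.card_le_card hcover
      _ ≤ ∑ i : Fin w, ((T i).1 ∪ (T i).2).card := Finset.card_biUnion_le
      _ ≤ ∑ _i : Fin w, d := by
          refine Finset.sum_le_sum fun i _ => ?_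
          exact le_trans (Finset.card_union_le _ _) (hd_le i)
      _ = w * d := by simp [Finset.sum_const, Finset.card_univ, mul_comm]
  -- (b) ∀ i, width of term i ≤ 2s
  have hterm2s : ∀ i : Fin w, ((T i).1).card + ((T i).2).card ≤ 2 * s := by
    intro i
    set A := (univ.filter fun k => f (bflip (onS (T i).1) k) ≠ f (onS (T i).1)) with hA
    set B := (univ.filter fun k => f (bflip (fun _ => false) k) ≠ f (fun _ => false)) with hB
    have hxi : f (onS (T i).1) = true :=
      hftrue _ i (le_refl _) (fun k hk hk1 => (Finset.disjoint_left.1 (hterm i)) hk1 hk)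
    have hsubP : (T i).1 ⊆ A := by
      intro k hk
      refine Finset.mem_filter.2 ⟨Finset.mem_univ k, ?_⟩
      rw [hxi, bflip_onS_mem _ _ hk]
      have : f (onS (((T i).1).erase k)) = false := by
        apply hffalse
        intro j hj
        by_cases hji : j = i
        · subst hji
          exact (Finset.mem_erase.1 (hj hk)).1 rfl
        · obtain ⟨m, hm⟩ := hPne j
          have : m ∈ (T i).1 := Finset.erase_subset _ _ (hj hm)
          exact (Finset.disjoint_left.1 (hblock j i hji)) hm this
      rw [this]; exact Bool.false_ne_true
    have hsubN : (T i).2 ⊆ A ∪ B := by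
      intro k hk
      have hkP : k ∉ (T i).1 := fun h => (Finset.disjoint_left.1 (hterm i)) h hk
      by_cases hsens : f (bflip (onS (T i).1) k) ≠ f (onS (T i).1)
      · exact Finset.mem_union_left _ (Finset.mem_filter.2 ⟨Finset.mem_univ k, hsens⟩)
      · -- k is sensitive at 0
        push_neg at hsens
        rw [hxi, bflip_onS_not_mem _ _ hkP] at hsens
        obtain ⟨j, hj⟩ := (hf _).1 hsens
        rw [termTrue_onS_iff] at hj
        obtain ⟨hj1, hj2⟩ := hj
        have hji : j ≠ i := by
          rintro rfl
          exact hj2 k hk (Finset.mem_insert_self _ _)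
        have hPjk : (T j).1 = {k} := by
          have hsub : (T j).1 ⊆ {k} := by
            intro m hm
            rcases Finset.mem_insert.1 (hj1 hm) with h | h
            · simp [h]
            · exact absurd h fun h => (Finset.disjoint_left.1 (hblock j i hji)) hm h
          obtain ⟨m, hm⟩ := hPne j
          have : m = k := by simpa using hsub hm
          subst this
          exact Finset.Subset.antisymm hsub (Finset.singleton_subset_iff.2 hm)
        refine Finset.mem_union_right _ (Finset.mem_filter.2 ⟨Finset.mem_univ k, ?_⟩)
        rw [h0]
        have : bflip (fun _ => false : Fin n → Bool) k = onS {k} := by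
          rw [← onS_empty, bflip_onS_not_mem _ _ (Finset.notMem_empty k)]
          simp
        rw [this]
        have hkPj : k ∈ (T j).1 := by rw [hPjk]; exact Finset.mem_singleton_self k
        have htr : f (onS {k}) = true := by
          apply hftrue _ j (by rw [hPjk])
          intro m hm hm'
          have : m = k := by simpa using hm'
          subst this
          exact (Finset.disjoint_left.1 (hterm j)) hkPj hm
        simp [htr]
    have hcard : ((T i).1).card + ((T i).2).card ≤ A.card + B.card := by
      calc ((T i).1).card + ((T i).2).card = ((T i).1 ∪ (T i).2).card :=
            (Finset.card_union_of_disjoint (hterm i)).symm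
        _ ≤ (A ∪ B).card := by
            apply Finset.card_le_card
            intro k hk
            rcases Finset.mem_union.1 hk with h | h
            · exact Finset.mem_union_left _ (hsubP h)
            · exact hsubN h
        _ ≤ A.card + B.card := Finset.card_union_le _ _
    have hAs : A.card ≤ s := hsensAt_le (onS (T i).1)
    have hBs : B.card ≤ s := hsensAt_le (fun _ => false)
    omega
  have hd2s : d ≤ 2 * s := by
    rw [hd]
    exact Finset.sup_le fun i _ => hterm2s i
  -- dispatch n = 0
  rcases Nat.eq_zero_or_pos n with hn | hn
  · subst hn
    simp only [Nat.cast_zero]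
    rw [Real.zero_rpow (by norm_num)]
    norm_num
  -- now n ≥ 1, hence w ≥ 1 and d ≥ 1
  have hw1 : 1 ≤ w := by
    rcases Nat.eq_zero_or_pos w with h | h
    · rw [h] at hnwd; simp at hnwd; omega
    · exact h
  have hd1 : 1 ≤ d := by
    rcases Nat.eq_zero_or_pos d with h | h
    · rw [h] at hnwd; simp at hnwd; omega
    · exact h
  -- conflict relation between terms
  let Erel : Fin w → Fin w → Prop := fun i j => ((T i).2 ∩ (T j).1).Nonempty
  haveI : DecidableRel Erel := fun _ _ => Finset.decidableNonempty
  obtain ⟨M, hMV, hMind, hMsum⟩ := caroWei Erel univ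
  -- out-degree bound
  have hout : ∀ v : Fin w, (univ.filter fun u => Erel v u).card ≤ d - 1 := by
    intro v
    have hle : (univ.filter fun u => Erel v u).card ≤ ((T v).2).card := by
      set g : Fin w → Fin n := fun u =>
        if h : ((T v).2 ∩ (T u).1).Nonempty then h.choose else ⟨0, hn⟩ with hg
      apply Finset.card_le_card_of_injOn g
      · intro u hu
        have h := (Finset.mem_filter.1 hu).2
        have : g u = h.choose := by rw [hg]; exact dif_pos h
        rw [this]
        exact (Finset.mem_inter.1 h.choose_spec).1
      · intro u1 hu1 u2 hu2 heq
        simp only [Finset.coe_filter, Set.mem_setOf_eq] at hu1 hu2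
        have h1 := hu1.2
        have h2 := hu2.2
        have e1 : g u1 = h1.choose := by rw [hg]; exact dif_pos h1
        have e2 : g u2 = h2.choose := by rw [hg]; exact dif_pos h2
        by_contra hne
        have m1 : g u1 ∈ (T u1).1 := by
          rw [e1]; exact (Finset.mem_inter.1 h1.choose_spec).2
        have m2 : g u2 ∈ (T u2).1 := by
          rw [e2]; exact (Finset.mem_inter.1 h2.choose_spec).2
        rw [heq] at m1
        exact (Finset.disjoint_left.1 (hblock u2 u1 (Ne.symm hne))) m2 m1
    have h1 : 1 ≤ ((T v).1).card := Finset.card_pos.2 (hPne v)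
    have h2 := hd_le v
    omega
  -- total degree bound
  have hdegsum : ∑ v : Fin w, (univ.filter fun u => u ≠ v ∧ (Erel v u ∨ Erel u v)).card
      ≤ 2 * (w * (d - 1)) := by
    have hsplit : ∀ v : Fin w,
        (univ.filter fun u => u ≠ v ∧ (Erel v u ∨ Erel u v)).card ≤
        (univ.filter fun u => Erel v u).card + (univ.filter fun u => Erel u v).card := by
      intro v
      calc (univ.filter fun u => u ≠ v ∧ (Erel v u ∨ Erel u v)).card
          ≤ ((univ.filter fun u => Erel v u) ∪ (univ.filter fun u => Erel u v)).card := by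
            apply Finset.card_le_card
            intro u hu
            have h := (Finset.mem_filter.1 hu).2
            rcases h.2 with h' | h'
            · exact Finset.mem_union_left _ (Finset.mem_filter.2 ⟨Finset.mem_univ u, h'⟩)
            · exact Finset.mem_union_right _ (Finset.mem_filter.2 ⟨Finset.mem_univ u, h'⟩)
        _ ≤ _ := Finset.card_union_le _ _
    have hswap : ∑ v : Fin w, (univ.filter fun u => Erel u v).card
        = ∑ u : Fin w, (univ.filter fun v => Erel u v).card := by
      simp_rw [Finset.card_filter]
      exact Finset.sum_comm
    calc ∑ v : Fin w, (univ.filter fun u => u ≠ v ∧ (Erel v u ∨ Erel u v)).card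
        ≤ ∑ v : Fin w, ((univ.filter fun u => Erel v u).card
            + (univ.filter fun u => Erel u v).card) := Finset.sum_le_sum fun v _ => hsplit v
      _ = (∑ v : Fin w, (univ.filter fun u => Erel v u).card)
            + ∑ v : Fin w, (univ.filter fun u => Erel u v).card := Finset.sum_add_distrib
      _ ≤ (w * (d-1)) + (w * (d-1)) := by
          rw [hswap]
          have hb : ∀ v : Fin w, v ∈ univ → (univ.filter fun u => Erel v u).card ≤ d - 1 :=
            fun v _ => hout v
          have := Finset.sum_le_sum hb
          simp only [Finset.sum_const, Finset.card_univ, Fintype.card_fin, smul_eq_mul] at this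
          omega
      _ = 2 * (w * (d-1)) := by ring
  -- Cauchy–Schwarz / AM-HM step
  have hposg : ∀ v : Fin w,
      (0:ℝ) < ((univ.filter fun u => u ≠ v ∧ (Erel v u ∨ Erel u v)).card : ℝ) + 1 := by
    intro v; positivity
  have hgsum : ∑ v : Fin w,
      (((univ.filter fun u => u ≠ v ∧ (Erel v u ∨ Erel u v)).card : ℝ) + 1)
      ≤ (w:ℝ) * (2*(d:ℝ) - 1) := by
    have hcast : ∑ v : Fin w,
        (((univ.filter fun u => u ≠ v ∧ (Erel v u ∨ Erel u v)).card : ℝ) + 1)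
        = ((∑ v : Fin w, (univ.filter fun u => u ≠ v ∧ (Erel v u ∨ Erel u v)).card : ℕ) : ℝ)
          + w := by
      rw [Finset.sum_add_distrib]
      push_cast
      simp [Finset.card_univ]
    rw [hcast]
    have h1 : ((∑ v : Fin w, (univ.filter fun u => u ≠ v ∧ (Erel v u ∨ Erel u v)).card : ℕ) : ℝ)
        ≤ ((2 * (w * (d-1)) : ℕ) : ℝ) := by exact_mod_cast hdegsum
    have h2 : ((2 * (w * (d-1)) : ℕ) : ℝ) = 2 * ((w:ℝ) * ((d:ℝ) - 1)) := by
      push_cast [Nat.cast_sub hd1]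
      ring
    rw [h2] at h1
    nlinarith [h1]
  have hCS : ((w:ℝ))^2 ≤ (M.card : ℝ) * ((w:ℝ) * (2*(d:ℝ) - 1)) := by
    have hgpos : (0:ℝ) < ∑ v : Fin w,
        (((univ.filter fun u => u ≠ v ∧ (Erel v u ∨ Erel u v)).card : ℝ) + 1) := by
      apply Finset.sum_pos (fun v _ => hposg v)
      haveI : Nonempty (Fin w) := Fin.pos_iff_nonempty.1 (by omega)
      exact Finset.univ_nonempty
    have hAMHM := Finset.sq_sum_div_le_sum_sq_div (univ : Finset (Fin w))
      (fun _ => (1:ℝ))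
      (g := fun v => ((univ.filter fun u => u ≠ v ∧ (Erel v u ∨ Erel u v)).card : ℝ) + 1)
      (fun v _ => hposg v)
    simp only [one_pow, Finset.sum_const, Finset.card_univ, Fintype.card_fin,
      nsmul_eq_mul, smul_eq_mul, mul_one, one_div] at hAMHM
    have hM : ((w:ℝ))^2 / (∑ v : Fin w,
        (((univ.filter fun u => u ≠ v ∧ (Erel v u ∨ Erel u v)).card : ℝ) + 1))
        ≤ (M.card : ℝ) := le_trans hAMHM hMsum
    rw [div_le_iff₀ hgpos] at hM
    calc ((w:ℝ))^2 ≤ (M.card : ℝ) * ∑ v : Fin w,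
          (((univ.filter fun u => u ≠ v ∧ (Erel v u ∨ Erel u v)).card : ℝ) + 1) := hM
      _ ≤ (M.card : ℝ) * ((w:ℝ) * (2*(d:ℝ) - 1)) := by
          apply mul_le_mul_of_nonneg_left hgsum (by positivity)
  have hwM : (w:ℝ) ≤ (M.card : ℝ) * (2*(d:ℝ) - 1) := by
    have hw0 : (0:ℝ) < w := by exact_mod_cast hw1
    have := hCS
    nlinarith [this, hw0]
  -- the sensitive point from the independent set
  have hmPch : ∀ i, ((T i).1).Nonempty := hPne
  set mm : Fin w → Fin n := fun i => (hPne i).choose with hmm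
  have hmP : ∀ i, mm i ∈ (T i).1 := fun i => (hPne i).choose_spec
  set S := M.biUnion (fun i => ((T i).1).erase (mm i)) with hSdef
  have hmS : ∀ j, mm j ∉ S := by
    intro j hj
    obtain ⟨i, hiM, hin⟩ := Finset.mem_biUnion.1 hj
    by_cases hij : i = j
    · subst hij; exact (Finset.mem_erase.1 hin).1 rfl
    · exact (Finset.disjoint_left.1 (hblock i j hij)) (Finset.erase_subset _ _ hin) (hmP j)
  have hfx : f (onS S) = false := hffalse S (fun j hsub => hmS j (hsub (hmP j)))
  have hsens : ∀ i ∈ M, f (bflip (onS S) (mm i)) ≠ f (onS S) := by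
    intro i hiM
    rw [hfx, bflip_onS_not_mem _ _ (hmS i)]
    have htr : f (onS (insert (mm i) S)) = true := by
      apply hftrue _ i
      · intro k hk
        by_cases hkm : k = mm i
        · subst hkm; exact Finset.mem_insert_self _ _
        · exact Finset.mem_insert_of_mem
            (Finset.mem_biUnion.2 ⟨i, hiM, Finset.mem_erase.2 ⟨hkm, hk⟩⟩)
      · intro k hk hkin
        rcases Finset.mem_insert.1 hkin with h | h
        · exact (Finset.disjoint_left.1 (hterm i)) (h ▸ hmP i) hk
        · obtain ⟨i', hi'M, hin⟩ := Finset.mem_biUnion.1 h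
          have hkP : k ∈ (T i').1 := Finset.erase_subset _ _ hin
          by_cases hii : i' = i
          · subst hii; exact (Finset.disjoint_left.1 (hterm i')) hkP hk
          · exact hMind i hiM i' hi'M (Ne.symm hii)
              ⟨k, Finset.mem_inter.2 ⟨hk, hkP⟩⟩
    simp [htr]
  have hMs : M.card ≤ s := by
    have h1 : (M.image mm).card ≤ sensAt f (onS S) := by
      apply sensAt_ge
      intro k hk
      obtain ⟨i, hiM, rfl⟩ := Finset.mem_image.1 hk
      exact hsens i hiM
    have hinj : (M.image mm).card = M.card := by
      apply Finset.card_image_of_injOn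
      intro i _ j _ hij
      by_contra hne
      exact (Finset.disjoint_left.1 (hblock i j hne)) (hmP i) (by rw [hij]; exact hmP j)
    have := hsensAt_le (onS S)
    omega
  -- final numeric computation
  have hkey : (n:ℝ) ≤ 8 * (s:ℝ)^3 := by
    have c1 : (n:ℝ) ≤ (w:ℝ) * d := by exact_mod_cast hnwd
    have c3 : (M.card : ℝ) ≤ s := by exact_mod_cast hMs
    have c4 : (d:ℝ) ≤ 2*(s:ℝ) := by exact_mod_cast hd2s
    have hd1R : (1:ℝ) ≤ (d:ℝ) := by exact_mod_cast hd1
    have hs0 : (0:ℝ) ≤ (s:ℝ) := Nat.cast_nonneg s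
    have hdd : (d:ℝ)*(d:ℝ) ≤ (2*(s:ℝ))*(2*(s:ℝ)) :=
      mul_le_mul c4 c4 (by linarith) (by linarith)
    calc (n:ℝ) ≤ (w:ℝ)*(d:ℝ) := c1
      _ ≤ ((M.card:ℝ)*(2*(d:ℝ)-1))*(d:ℝ) := mul_le_mul_of_nonneg_right hwM (by linarith)
      _ ≤ ((s:ℝ)*(2*(d:ℝ)-1))*(d:ℝ) := by
          apply mul_le_mul_of_nonneg_right _ (by linarith)
          exact mul_le_mul_of_nonneg_right c3 (by linarith)
      _ ≤ ((s:ℝ)*(2*(d:ℝ)))*(d:ℝ) := by nlinarith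
      _ = 2*(s:ℝ)*((d:ℝ)*(d:ℝ)) := by ring
      _ ≤ 2*(s:ℝ)*((2*(s:ℝ))*(2*(s:ℝ))) := by
          apply mul_le_mul_of_nonneg_left hdd (by linarith)
      _ = 8*(s:ℝ)^3 := by ring
  have h2s : (0:ℝ) ≤ 2*(s:ℝ) := by positivity
  have hcube : (8:ℝ)*(s:ℝ)^3 = (2*(s:ℝ))^(3:ℕ) := by ring
  have h1 : (n:ℝ)^((1:ℝ)/3) ≤ ((2*(s:ℝ))^(3:ℕ))^((1:ℝ)/3) := by
    apply Real.rpow_le_rpow (Nat.cast_nonneg n) _ (by norm_num)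
    rw [← hcube]; exact hkey
  rw [← Real.rpow_natCast (2*(s:ℝ)) 3, ← Real.rpow_mul h2s] at h1
  norm_num at h1
  linarith
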